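/- arXiv:1702.06939 — 2 statements merged into one kernel-verified Lean document; each statement's English description precedes it below -/
import Mathlib

section
/- Let d > 0, θ̄ ∈ [0, π), ρ₊, ρ₋ ≥ 0 and let f̄ be the equilibrium profile built from the generalized von Mises density M_θ̄. Then the nematic current of f̄ satisfies J_{f̄} := ∫_{−π}^{π} (cos 2θ, sin 2θ) f̄(θ) dθ = (ρ₊ + ρ₋) · ⟨cos 2θ⟩_M · (cos 2θ̄, sin 2θ̄), where ⟨cos 2θ⟩_M = (∫₀^{π/2} cos(2θ) e^{−1/(d cos θ)} dθ)/(∫₀^{π/2} e^{−1/(d cos θ)} dθ). In particular the nematic current of every equilibrium points in the nematic direction (cos 2θ̄, sin 2θ̄). -/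
open Real MeasureTheory Set

/-- Normalization constant of the generalized von Mises distribution. -/
noncomputable def Zd (d : ℝ) : ℝ := ∫ θ in (-(π/2))..(π/2), exp (-1 / (d * cos θ))

/-- Generalized von Mises density with nematic mean direction `θb`. -/
noncomputable def GVM (d θb θ : ℝ) : ℝ := (1 / Zd d) * exp (-1 / (d * |cos (θ - θb)|))

/-- Equilibrium profile of the nematic alignment operator. -/
noncomputable def fbar (d θb ρp ρm θ : ℝ) : ℝ :=
  if 0 < cos (θ - θb) then ρp * GVM d θb θ
  else if cos (θ - θb) < 0 then ρm * GVM d θb θ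
  else 0

/-- Generalized von Mises average of a function `φ` on `[0, π/2)`. -/
noncomputable def gvmAvg (d : ℝ) (φ : ℝ → ℝ) : ℝ :=
  (∫ θ in (0:ℝ)..(π/2), φ θ * exp (-1 / (d * cos θ))) /
    (∫ θ in (0:ℝ)..(π/2), exp (-1 / (d * cos θ)))

/- ----------------------- auxiliary lemmas ----------------------- -/

lemma aux_ii {f : ℝ → ℝ} (hf : Measurable f) {C a b : ℝ}
    (hC : ∀ x ∈ Set.uIcc a b, |f x| ≤ C) : IntervalIntegrable f volume a b := by
  rw [intervalIntegrable_iff]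
  apply Measure.integrableOn_of_bounded (measure_Ioc_lt_top).ne hf.aestronglyMeasurable
  filter_upwards [ae_restrict_mem measurableSet_uIoc] with x hx
  simpa using hC x (Set.uIoc_subset_uIcc hx)

lemma fbar_measurable (d θb ρp ρm : ℝ) : Measurable (fbar d θb ρp ρm) := by
  unfold fbar GVM
  apply Measurable.ite (measurableSet_lt measurable_const (by fun_prop))
  · fun_prop
  · exact Measurable.ite (measurableSet_lt (by fun_prop) measurable_const) (by fun_prop)
      measurable_const

lemma fbar_bound (d : ℝ) (hd : 0 < d) (θb ρp ρm : ℝ) (hρp : 0 ≤ ρp) (hρm : 0 ≤ ρm) (θ : ℝ) :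
    |fbar d θb ρp ρm θ| ≤ (ρp + ρm) * |1 / Zd d| := by
  have key : ∀ c ρ : ℝ, 0 ≤ ρ → ρ ≤ ρp + ρm → c ≠ 0 →
      |ρ * (1 / Zd d * exp (-1 / (d * |c|)))| ≤ (ρp + ρm) * |1 / Zd d| := by
    intro c ρ hρ hρle hc
    have hdc : 0 < d * |c| := mul_pos hd (abs_pos.2 hc)
    have he : exp (-1 / (d * |c|)) ≤ 1 :=
      Real.exp_le_one_iff.2 (div_nonpos_iff.mpr (Or.inr ⟨by norm_num, hdc.le⟩))
    have he0 : (0:ℝ) < exp (-1 / (d * |c|)) := exp_pos _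
    rw [abs_mul, abs_mul, abs_of_nonneg hρ, abs_of_nonneg he0.le]
    calc ρ * (|1 / Zd d| * exp (-1 / (d * |c|))) ≤ (ρp + ρm) * (|1 / Zd d| * 1) := by
          apply mul_le_mul hρle _ (by positivity) (by linarith)
          exact mul_le_mul_of_nonneg_left he (abs_nonneg _)
      _ = (ρp + ρm) * |1 / Zd d| := by ring
  unfold fbar GVM
  split_ifs with h1 h2
  · exact key _ _ hρp (by linarith) (ne_of_gt h1)
  · exact key _ _ hρm (by linarith) (ne_of_lt h2)
  · simpa using by positivity

lemma fbar_shift (d θb ρp ρm u : ℝ) :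
    fbar d θb ρp ρm (u + θb) = fbar d 0 ρp ρm u := by
  simp [fbar, GVM, add_sub_cancel_right]

lemma fbar_even (d ρp ρm u : ℝ) :
    fbar d 0 ρp ρm (-u) = fbar d 0 ρp ρm u := by
  simp [fbar, GVM]

/- the key integrals over the symmetric zero-centered profile -/

lemma sin_integral_zero (d : ℝ) (hd : 0 < d) (ρp ρm : ℝ) (hρp : 0 ≤ ρp) (hρm : 0 ≤ ρm) :
    (∫ u in (-π)..π, sin (2*u) * fbar d 0 ρp ρm u) = 0 := by
  have hmeas : Measurable (fun u => sin (2*u) * fbar d 0 ρp ρm u) :=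
    (by fun_prop : Measurable fun u : ℝ => sin (2*u)).mul (fbar_measurable d 0 ρp ρm)
  have hbd : ∀ x : ℝ, |sin (2*x) * fbar d 0 ρp ρm x| ≤ (ρp + ρm) * |1 / Zd d| := by
    intro x
    rw [abs_mul]
    calc |sin (2*x)| * |fbar d 0 ρp ρm x| ≤ 1 * ((ρp + ρm) * |1 / Zd d|) :=
        mul_le_mul (abs_sin_le_one _) (fbar_bound d hd 0 ρp ρm hρp hρm x) (abs_nonneg _)
          zero_le_one
      _ = (ρp + ρm) * |1 / Zd d| := one_mul _
  have hint : ∀ a b : ℝ, IntervalIntegrable (fun u => sin (2*u) * fbar d 0 ρp ρm u) volume a b :=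
    fun a b => aux_ii hmeas (fun x _ => hbd x)
  have hsplit := intervalIntegral.integral_add_adjacent_intervals (hint (-π) 0) (hint 0 π)
  have hneg : (∫ u in (-π)..(0:ℝ), sin (2*u) * fbar d 0 ρp ρm u)
      = - ∫ u in (0:ℝ)..π, sin (2*u) * fbar d 0 ρp ρm u := by
    have := intervalIntegral.integral_comp_neg (a := (0:ℝ)) (b := π)
      (fun u => sin (2*u) * fbar d 0 ρp ρm u)
    rw [neg_zero] at this
    rw [← this, ← intervalIntegral.integral_neg]
    apply intervalIntegral.integral_congr
    intro x _
    simp [fbar_even, mul_comm]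
  linarith [hsplit, hneg]

lemma cos_integral (d : ℝ) (hd : 0 < d) (ρp ρm : ℝ) (hρp : 0 ≤ ρp) (hρm : 0 ≤ ρm) :
    (∫ u in (-π)..π, cos (2*u) * fbar d 0 ρp ρm u)
      = (ρp + ρm) * gvmAvg d (fun θ => cos (2*θ)) := by
  have hmeas : Measurable (fun u => cos (2*u) * fbar d 0 ρp ρm u) :=
    (by fun_prop : Measurable fun u : ℝ => cos (2*u)).mul (fbar_measurable d 0 ρp ρm)
  have hbd : ∀ x : ℝ, |cos (2*x) * fbar d 0 ρp ρm x| ≤ (ρp + ρm) * |1 / Zd d| := by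
    intro x
    rw [abs_mul]
    calc |cos (2*x)| * |fbar d 0 ρp ρm x| ≤ 1 * ((ρp + ρm) * |1 / Zd d|) :=
        mul_le_mul (abs_cos_le_one _) (fbar_bound d hd 0 ρp ρm hρp hρm x) (abs_nonneg _)
          zero_le_one
      _ = (ρp + ρm) * |1 / Zd d| := one_mul _
  have hint : ∀ a b : ℝ, IntervalIntegrable (fun u => cos (2*u) * fbar d 0 ρp ρm u) volume a b :=
    fun a b => aux_ii hmeas (fun x _ => hbd x)
  -- evenness: integral over [-π,π] is twice integral over [0,π]
  have hsplit := intervalIntegral.integral_add_adjacent_intervals (hint (-π) 0) (hint 0 π)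
  have hneg : (∫ u in (-π)..(0:ℝ), cos (2*u) * fbar d 0 ρp ρm u)
      = ∫ u in (0:ℝ)..π, cos (2*u) * fbar d 0 ρp ρm u := by
    have := intervalIntegral.integral_comp_neg (a := (0:ℝ)) (b := π)
      (fun u => cos (2*u) * fbar d 0 ρp ρm u)
    rw [neg_zero] at this
    rw [← this]
    apply intervalIntegral.integral_congr
    intro x _
    simp [fbar_even]
  -- the half interval pieces
  have hpi2 : (0:ℝ) < π/2 := by positivity
  have hsplit2 := intervalIntegral.integral_add_adjacent_intervals (hint 0 (π/2)) (hint (π/2) π)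
  -- first piece
  have hI1 : (∫ u in (0:ℝ)..(π/2), cos (2*u) * fbar d 0 ρp ρm u)
      = ρp * (1 / Zd d) * ∫ θ in (0:ℝ)..(π/2), cos (2*θ) * exp (-1 / (d * cos θ)) := by
    rw [← intervalIntegral.integral_const_mul]
    apply intervalIntegral.integral_congr_ae
    rw [ae_iff]
    apply measure_mono_null _ (volume_singleton (a := π/2))
    intro x hx
    simp only [mem_setOf_eq, Classical.not_imp] at hx
    obtain ⟨hmem, hne⟩ := hx
    rw [uIoc_of_le hpi2.le] at hmem
    by_contra hxne
    apply hne
    have hxlt : x < π/2 := lt_of_le_of_ne hmem.2 hxne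
    have hcos : 0 < cos x := cos_pos_of_mem_Ioo ⟨by linarith [hmem.1, pi_pos], hxlt⟩
    simp only [fbar, GVM, sub_zero, if_pos hcos, abs_of_pos hcos]
    ring
  -- second piece, by the substitution u = π - v
  have hI2 : (∫ u in (π/2)..π, cos (2*u) * fbar d 0 ρp ρm u)
      = ρm * (1 / Zd d) * ∫ θ in (0:ℝ)..(π/2), cos (2*θ) * exp (-1 / (d * cos θ)) := by
    have hc := intervalIntegral.integral_comp_sub_left (a := (0:ℝ)) (b := π/2)
      (fun u => cos (2*u) * fbar d 0 ρp ρm u) π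
    rw [show π - π/2 = π/2 by ring, sub_zero] at hc
    rw [← hc, ← intervalIntegral.integral_const_mul]
    apply intervalIntegral.integral_congr_ae
    rw [ae_iff]
    apply measure_mono_null _ (volume_singleton (a := π/2))
    intro x hx
    simp only [mem_setOf_eq, Classical.not_imp] at hx
    obtain ⟨hmem, hne⟩ := hx
    rw [uIoc_of_le hpi2.le] at hmem
    by_contra hxne
    apply hne
    have hxlt : x < π/2 := lt_of_le_of_ne hmem.2 hxne
    have hcos : 0 < cos x := cos_pos_of_mem_Ioo ⟨by linarith [hmem.1, pi_pos], hxlt⟩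
    have hcps : cos (π - x) = -cos x := by rw [cos_pi_sub]
    have h1 : ¬ (0 < cos (π - x - 0)) := by rw [sub_zero, hcps]; linarith
    have h2 : cos (π - x - 0) < 0 := by rw [sub_zero, hcps]; linarith
    have habs : |cos (π - x - 0)| = cos x := by rw [sub_zero, hcps, abs_neg, abs_of_pos hcos]
    have hcc : cos (2*(π - x)) = cos (2*x) := by
      rw [show 2*(π - x) = -(2*x) + 2*π by ring, cos_add_two_pi, cos_neg]
    simp only [fbar, GVM, if_neg h1, if_pos h2, habs, hcc]
    ring
  -- normalization: Zd d = 2 * ∫₀^{π/2} E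
  have hZ : Zd d = 2 * ∫ θ in (0:ℝ)..(π/2), exp (-1 / (d * cos θ)) := by
    have hmE : Measurable (fun θ : ℝ => exp (-1 / (d * cos θ))) := by fun_prop
    have hbdE : ∀ x ∈ Set.uIcc (-(π/2)) (π/2), |exp (-1 / (d * cos x))| ≤ 1 := by
      intro x hx
      rw [Set.uIcc_of_le (by linarith : -(π/2) ≤ π/2)] at hx
      have hcx : 0 ≤ cos x := cos_nonneg_of_mem_Icc ⟨hx.1, hx.2⟩
      rw [abs_of_pos (exp_pos _)]
      apply Real.exp_le_one_iff.2
      rcases eq_or_lt_of_le hcx with h | h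
      · rw [← h, mul_zero, div_zero]
      · exact (div_nonpos_iff.mpr (Or.inr ⟨by norm_num, (mul_pos hd h).le⟩))
    have hintE1 : IntervalIntegrable (fun θ : ℝ => exp (-1 / (d * cos θ))) volume (-(π/2)) 0 := by
      apply aux_ii hmE
      intro x hx
      rw [Set.uIcc_of_le (by linarith [pi_pos] : -(π/2) ≤ (0:ℝ))] at hx
      exact hbdE x (by rw [Set.uIcc_of_le (by linarith [pi_pos] : -(π/2) ≤ π/2)]
                       exact ⟨hx.1, by linarith [hx.2, pi_pos]⟩)
    have hintE2 : IntervalIntegrable (fun θ : ℝ => exp (-1 / (d * cos θ))) volume 0 (π/2) := by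
      apply aux_ii hmE
      intro x hx
      rw [Set.uIcc_of_le (by linarith [pi_pos] : (0:ℝ) ≤ π/2)] at hx
      exact hbdE x (by rw [Set.uIcc_of_le (by linarith [pi_pos] : -(π/2) ≤ π/2)]
                       exact ⟨by linarith [hx.1, pi_pos], hx.2⟩)
    have hsp := intervalIntegral.integral_add_adjacent_intervals hintE1 hintE2
    have hnegE : (∫ θ in (-(π/2))..(0:ℝ), exp (-1 / (d * cos θ)))
        = ∫ θ in (0:ℝ)..(π/2), exp (-1 / (d * cos θ)) := by
      have := intervalIntegral.integral_comp_neg (a := (0:ℝ)) (b := π/2)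
        (fun θ => exp (-1 / (d * cos θ)))
      rw [neg_zero] at this
      rw [← this]
      apply intervalIntegral.integral_congr
      intro x _
      simp
    unfold Zd
    rw [← hsp, hnegE]
    ring
  -- positivity of the denominator
  have hIden : (0:ℝ) < ∫ θ in (0:ℝ)..(π/2), exp (-1 / (d * cos θ)) := by
    apply intervalIntegral.intervalIntegral_pos_of_pos_on
    · apply aux_ii (by fun_prop)
      intro x hx
      rw [Set.uIcc_of_le hpi2.le] at hx
      have hcx : 0 ≤ cos x := cos_nonneg_of_mem_Icc ⟨by linarith [hx.1], hx.2⟩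
      rw [abs_of_pos (exp_pos _)]
      apply Real.exp_le_one_iff.2
      rcases eq_or_lt_of_le hcx with h | h
      · rw [← h, mul_zero, div_zero]
      · exact (div_nonpos_iff.mpr (Or.inr ⟨by norm_num, (mul_pos hd h).le⟩))
    · exact fun x _ => exp_pos _
    · exact hpi2
  -- assemble
  have hden : (∫ θ in (0:ℝ)..(π/2), exp (-1 / (d * cos θ))) ≠ 0 := ne_of_gt hIden
  rw [← hsplit, hneg, ← hsplit2, hI1, hI2]
  unfold gvmAvg
  rw [hZ]
  field_simp
  ring

/- ----------------------- main theorem ----------------------- -/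

/-- The nematic current of the equilibrium profile equals
`(ρp + ρm) · ⟨cos 2θ⟩_M · (cos 2θb, sin 2θb)`: it points in the nematic direction. -/
theorem equilibrium_nematic_current
    (d : ℝ) (hd : 0 < d) (θb : ℝ) (hθb : θb ∈ Ico 0 π)
    (ρp ρm : ℝ) (hρp : 0 ≤ ρp) (hρm : 0 ≤ ρm) :
    (∫ θ in (-π)..π, cos (2*θ) * fbar d θb ρp ρm θ)
        = (ρp + ρm) * gvmAvg d (fun θ => cos (2*θ)) * cos (2*θb) ∧
    (∫ θ in (-π)..π, sin (2*θ) * fbar d θb ρp ρm θ)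
        = (ρp + ρm) * gvmAvg d (fun θ => cos (2*θ)) * sin (2*θb) := by
  have hfper : ∀ θ : ℝ, fbar d θb ρp ρm (θ + 2*π) = fbar d θb ρp ρm θ := by
    intro θ
    have h : θ + 2*π - θb = (θ - θb) + 2*π := by ring
    simp only [fbar, GVM, h, cos_add_two_pi]
  have hmeasf := fbar_measurable d θb ρp ρm
  have hmeasG := fbar_measurable d 0 ρp ρm
  have hbdG := fbar_bound d hd 0 ρp ρm hρp hρm
  -- generic shift argument for a 2π-periodic weight c
  have main : ∀ c : ℝ → ℝ, Measurable c → (∀ x, |c x| ≤ 1) →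
      (∀ θ, c (θ + 2*π) = c θ) →
      (∫ θ in (-π)..π, c θ * fbar d θb ρp ρm θ)
        = ∫ u in (-π)..π, c (u + θb) * fbar d 0 ρp ρm u := by
    intro c hcm hcb hcp
    have hper : Function.Periodic (fun θ => c θ * fbar d θb ρp ρm θ) (2*π) := by
      intro θ; simp only [hfper, hcp]
    have h1 := hper.intervalIntegral_add_eq (-π) (θb - π)
    rw [show -π + 2*π = π by ring, show θb - π + 2*π = θb + π by ring] at h1
    have h2 := intervalIntegral.integral_comp_add_right (a := -π) (b := π)
      (fun θ => c θ * fbar d θb ρp ρm θ) θb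
    rw [show -π + θb = θb - π by ring, show π + θb = θb + π by ring] at h2
    rw [h1, ← h2]
    apply intervalIntegral.integral_congr
    intro x _
    simp [fbar_shift]
  have hsin0 := sin_integral_zero d hd ρp ρm hρp hρm
  have hcosI := cos_integral d hd ρp ρm hρp hρm
  have hintc : ∀ a b : ℝ, IntervalIntegrable (fun u => cos (2*u) * fbar d 0 ρp ρm u) volume a b := by
    intro a b
    apply aux_ii ((by fun_prop : Measurable fun u : ℝ => cos (2*u)).mul hmeasG)
    intro x _
    rw [Pi.mul_apply, abs_mul]
    calc |cos (2*x)| * |fbar d 0 ρp ρm x| ≤ 1 * ((ρp + ρm) * |1 / Zd d|) :=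
        mul_le_mul (abs_cos_le_one _) (hbdG x) (abs_nonneg _) zero_le_one
      _ = (ρp + ρm) * |1 / Zd d| := one_mul _
  have hints : ∀ a b : ℝ, IntervalIntegrable (fun u => sin (2*u) * fbar d 0 ρp ρm u) volume a b := by
    intro a b
    apply aux_ii ((by fun_prop : Measurable fun u : ℝ => sin (2*u)).mul hmeasG)
    intro x _
    rw [Pi.mul_apply, abs_mul]
    calc |sin (2*x)| * |fbar d 0 ρp ρm x| ≤ 1 * ((ρp + ρm) * |1 / Zd d|) :=
        mul_le_mul (abs_sin_le_one _) (hbdG x) (abs_nonneg _) zero_le_one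
      _ = (ρp + ρm) * |1 / Zd d| := one_mul _
  constructor
  · rw [main (fun θ => cos (2*θ)) (by fun_prop) (fun x => abs_cos_le_one _)
      (fun θ => by show cos (2*(θ + 2*π)) = cos (2*θ)
                   rw [show 2*(θ + 2*π) = ((2*θ) + 2*π) + 2*π by ring,
                       cos_add_two_pi, cos_add_two_pi])]
    have hexp : ∀ u : ℝ, cos (2*(u + θb)) * fbar d 0 ρp ρm u
        = cos (2*θb) * (cos (2*u) * fbar d 0 ρp ρm u)
          - sin (2*θb) * (sin (2*u) * fbar d 0 ρp ρm u) := by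
      intro u
      rw [show 2*(u + θb) = 2*u + 2*θb by ring, cos_add]
      ring
    rw [intervalIntegral.integral_congr (fun x _ => hexp x),
      intervalIntegral.integral_sub ((hintc (-π) π).const_mul _) ((hints (-π) π).const_mul _),
      intervalIntegral.integral_const_mul, intervalIntegral.integral_const_mul,
      hsin0, hcosI]
    ring
  · rw [main (fun θ => sin (2*θ)) (by fun_prop) (fun x => abs_sin_le_one _)
      (fun θ => by show sin (2*(θ + 2*π)) = sin (2*θ)
                   rw [show 2*(θ + 2*π) = ((2*θ) + 2*π) + 2*π by ring,
                       sin_add_two_pi, sin_add_two_pi])]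
    have hexp : ∀ u : ℝ, sin (2*(u + θb)) * fbar d 0 ρp ρm u
        = sin (2*θb) * (cos (2*u) * fbar d 0 ρp ρm u)
          + cos (2*θb) * (sin (2*u) * fbar d 0 ρp ρm u) := by
      intro u
      rw [show 2*(u + θb) = 2*u + 2*θb by ring, sin_add]
      ring
    rw [intervalIntegral.integral_congr (fun x _ => hexp x),
      intervalIntegral.integral_add ((hintc (-π) π).const_mul _) ((hints (-π) π).const_mul _),
      intervalIntegral.integral_const_mul, intervalIntegral.integral_const_mul,
      hsin0, hcosI]
    ring
end

section
/- Let d > 0, θ̄ ∈ [0, π), and let f be any function differentiable at a point θ with cos(θ − θ̄) ≠ 0. Then the alignment flux admits the divergence (weighted-gradient) form: Sign(cos(θ − θ̄))·sin(θ − θ̄)·f(θ) + d·cos²(θ − θ̄)·f′(θ) = d·cos²(θ − θ̄)·M_θ̄(θ)·(d/dθ)(f/M_θ̄)(θ), where Sign(a) = 1 if a > 0 and −1 if a < 0. In particular the nematic alignment operator Q_al(f) = ∂_θ[Sign(cos(θ−θ̄)) sin(θ−θ̄) f + d cos²(θ−θ̄) ∂_θ f] can be written as ∂_θ[d cos²(θ−θ̄)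 M_θ̄ ∂_θ(f/M_θ̄)] away from cos(θ − θ̄) = 0. -/
open Real MeasureTheory Set

/-- Sign function: 1 for positive, -1 otherwise. -/
noncomputable def Sign (a : ℝ) : ℝ := if 0 < a then 1 else -1

lemma Zd_pos {d : ℝ} (hd : 0 < d) : 0 < Zd d := by
  have hab : -(π/2) < π/2 := by linarith [pi_pos]
  have hint : IntervalIntegrable (fun θ => exp (-1 / (d * cos θ))) volume (-(π/2)) (π/2) := by
    rw [intervalIntegrable_iff]
    haveI : IsFiniteMeasure (volume.restrict (Set.uIoc (-(π/2)) (π/2))) :=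
      ⟨by rw [Measure.restrict_apply_univ, Set.uIoc_of_le hab.le, Real.volume_Ioc]; exact ENNReal.ofReal_lt_top⟩
    apply MeasureTheory.Integrable.mono' (g := fun _ => (1:ℝ))
    · exact integrable_const 1
    · apply Measurable.aestronglyMeasurable
      measurability
    · filter_upwards [MeasureTheory.ae_restrict_mem measurableSet_uIoc] with x hx
      rw [Real.norm_eq_abs, abs_of_pos (exp_pos _), Real.exp_le_one_iff]
      have hx' : x ∈ Set.Icc (-(π/2)) (π/2) := by
        rw [Set.uIoc_of_le hab.le] at hx
        exact ⟨hx.1.le, hx.2⟩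
      have hcos : 0 ≤ cos x := Real.cos_nonneg_of_mem_Icc hx'
      have h0 : 0 ≤ d * cos x := by positivity
      exact div_nonpos_of_nonpos_of_nonneg (by norm_num) h0
  exact intervalIntegral.intervalIntegral_pos_of_pos_on hint (fun x _ => exp_pos _) hab

/-- The alignment flux admits the divergence (weighted-gradient) form: away from
`cos (θ - θ̄) = 0`, for any `f` differentiable at `θ`,
`Sign(cos(θ−θ̄)) sin(θ−θ̄) f + d cos²(θ−θ̄) f′ = d cos²(θ−θ̄) M_θ̄ (f/M_θ̄)′`. -/
theorem alignment_flux_divergence_form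
    (d : ℝ) (hd : 0 < d) (θb : ℝ) (hθb : θb ∈ Ico 0 π)
    (f : ℝ → ℝ) (θ : ℝ) (hf : DifferentiableAt ℝ f θ) (hc : cos (θ - θb) ≠ 0) :
    Sign (cos (θ - θb)) * sin (θ - θb) * f θ + d * cos (θ - θb) ^ 2 * deriv f θ
      = d * cos (θ - θb) ^ 2 * GVM d θb θ * deriv (fun t => f t / GVM d θb t) θ := by
  have hZ : 0 < Zd d := Zd_pos hd
  set c := cos (θ - θb) with hcdef
  set s := sin (θ - θb) with hsdef
  set A := Sign c with hAdef
  have hA : A = 1 ∨ A = -1 := by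
    rw [hAdef]; unfold Sign; split <;> simp
  have hAc : A * c = |c| := by
    rcases lt_or_gt_of_ne hc with h | h
    · rw [hAdef]; unfold Sign; rw [if_neg (not_lt.mpr h.le), abs_of_neg h]; ring
    · rw [hAdef]; unfold Sign; rw [if_pos h, abs_of_pos h]; ring
  have hacpos : 0 < A * c := by rw [hAc]; exact abs_pos.mpr hc
  -- eventual sign constancy
  have hcont : Continuous fun t => cos (t - θb) := by continuity
  have hev : ∀ᶠ t in nhds θ, |cos (t - θb)| = A * cos (t - θb) := by
    rcases lt_or_gt_of_ne hc with h | h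
    · have hA' : A = -1 := by rw [hAdef]; unfold Sign; rw [if_neg (not_lt.mpr h.le)]
      have hop : IsOpen {t : ℝ | cos (t - θb) < 0} := isOpen_lt hcont continuous_const
      filter_upwards [hop.mem_nhds h] with t ht
      rw [abs_of_neg ht, hA']; ring
    · have hA' : A = 1 := by rw [hAdef]; unfold Sign; rw [if_pos h]
      have hop : IsOpen {t : ℝ | 0 < cos (t - θb)} := isOpen_lt continuous_const hcont
      filter_upwards [hop.mem_nhds h] with t ht
      rw [abs_of_pos ht, hA']; ring
  -- derivatives
  have h1 : HasDerivAt (fun t => t - θb) 1 θ := (hasDerivAt_id θ).sub_const θb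
  have hcos : HasDerivAt (fun t => cos (t - θb)) (-s) θ := by
    simpa [Function.comp_def] using (Real.hasDerivAt_cos (θ - θb)).comp θ h1
  have hg : HasDerivAt (fun t => d * (A * cos (t - θb))) (d * (A * -s)) θ :=
    (hcos.const_mul A).const_mul d
  have hgne : d * (A * c) ≠ 0 := by positivity
  have hv : HasDerivAt (fun t => -(d * (A * cos (t - θb)))⁻¹)
      (-(-(d * (A * -s)) / (d * (A * c)) ^ 2)) θ := (hg.inv hgne).neg
  have hE := hv.exp
  have hGVM : HasDerivAt (fun t => GVM d θb t)
      ((1 / Zd d) * (exp (-(d * (A * c))⁻¹) * -(-(d * (A * -s)) / (d * (A * c)) ^ 2))) θ := by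
    refine HasDerivAt.congr_of_eventuallyEq (hE.const_mul (1 / Zd d)) ?_
    filter_upwards [hev] with t ht
    simp only [GVM, ht, neg_div, one_div]
  have hGθ : GVM d θb θ = (1 / Zd d) * exp (-(d * (A * c))⁻¹) := by
    simp only [GVM, ← hcdef, ← hAc, neg_div, one_div]
  have hEpos : (0:ℝ) < exp (-(d * (A * c))⁻¹) := exp_pos _
  have hGne : GVM d θb θ ≠ 0 := by
    rw [hGθ]
    have : 0 < 1 / Zd d := by positivity
    positivity
  have hdiv := (hf.hasDerivAt).div hGVM hGne
  rw [show (fun t => f t / GVM d θb t) = f / fun t => GVM d θb t from rfl, hdiv.deriv, hGθ]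
  rcases hA with h | h <;> rw [h] <;>
    field_simp <;> ring
end
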